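/- The complete graph K₇ on seven vertices is 3-locatable in ℤ², but K₇ is not embeddable on 3 columns. -/

import Mathlib

open SimpleGraph

/-- Cast an integer grid point to a real point. -/
def castPt {d : ℕ} (p : Fin d → ℤ) : Fin d → ℝ := fun i => (p i : ℝ)

/-- The grid points lying on the closed segment in `ℝ^d` joining `a` and `b`. -/
def segGridPts {d : ℕ} (a b : Fin d → ℤ) : Set (Fin d → ℤ) :=
  {p | castPt p ∈ segment ℝ (castPt a) (castPt b)}

/-- `φ` is a grid drawing of `G` in `ℤ^d`: it is injective and no vertex image other than the
endpoints lies on the closed segment representing an edge. -/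
def IsGridDrawing {V : Type*} {d : ℕ} (G : SimpleGraph V) (φ : V → Fin d → ℤ) : Prop :=
  Function.Injective φ ∧
    ∀ u v w : V, G.Adj u v →
      castPt (φ w) ∈ segment ℝ (castPt (φ u)) (castPt (φ v)) → w = u ∨ w = v

/-- `G` is `q`-locatable in `ℤ^d`: it has a grid drawing in which every edge segment contains
at most `q` grid points. -/
def IsQLocatable {V : Type*} (G : SimpleGraph V) (d q : ℕ) : Prop :=
  ∃ φ : V → Fin d → ℤ, IsGridDrawing G φ ∧
    ∀ u v : V, G.Adj u v → (segGridPts (φ u) (φ v)).ncard ≤ q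

/-- A primitive grid drawing: every edge segment contains exactly its two endpoints
as grid points. -/
def IsPrimitiveDrawing {V : Type*} {d : ℕ} (G : SimpleGraph V) (φ : V → Fin d → ℤ) : Prop :=
  IsGridDrawing G φ ∧ ∀ u v : V, G.Adj u v → segGridPts (φ u) (φ v) = {φ u, φ v}

/-- `G` is locatable in `ℤ^d`: it has a primitive grid drawing in `ℤ^d`. -/
def IsLocatable {V : Type*} (G : SimpleGraph V) (d : ℕ) : Prop :=
  ∃ φ : V → Fin d → ℤ, IsPrimitiveDrawing G φ

/-- The rank of a grid point in `ℤ^d`: the tuple of its first `d - 1` coordinates. -/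
def rank {d : ℕ} (p : Fin d → ℤ) : Fin (d - 1) → ℤ :=
  fun i => p (Fin.castLE (Nat.sub_le d 1) i)

/-- `G` is embeddable on `l` columns: it has a grid drawing in `ℤ²` in which the first
coordinates of the vertex images take at most `l` distinct values. -/
def EmbeddableOnCols {V : Type*} (G : SimpleGraph V) (l : ℕ) : Prop :=
  ∃ φ : V → Fin 2 → ℤ, IsGridDrawing G φ ∧ (Set.range fun v => φ v 0).ncard ≤ l

/-- `G` can be located on `l` columns in `ℤ^d`: it has a primitive grid drawing in `ℤ^d`
using at most `l` columns. -/
def LocatableOnCols {V : Type*} (G : SimpleGraph V) (d l : ℕ) : Prop :=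
  ∃ φ : V → Fin d → ℤ, IsPrimitiveDrawing G φ ∧ (Set.range fun v => rank (φ v)).ncard ≤ l

/-- A linear forest: an acyclic graph with maximum degree at most two
(i.e. a disjoint union of paths). -/
def IsLinearForest {W : Type*} (H : SimpleGraph W) : Prop :=
  H.IsAcyclic ∧ ∀ v : W, {w | H.Adj v w}.ncard ≤ 2

/-- midpoint of two grid points (componentwise integer division). -/
def midPt (a b : Fin 2 → ℤ) : Fin 2 → ℤ := fun i => (a i + b i) / 2

lemma key_lemma (a b p : Fin 2 → ℤ)
    (hg0 : 0 < Int.gcd (b 0 - a 0) (b 1 - a 1))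
    (hg2 : Int.gcd (b 0 - a 0) (b 1 - a 1) ≤ 2)
    (hp : p ∈ segGridPts a b) :
    p = a ∨ (Int.gcd (b 0 - a 0) (b 1 - a 1) = 2 ∧ p = midPt a b) ∨ p = b := by
  obtain ⟨s, t, hs, ht, hst, heq⟩ := hp
  have hti : ∀ i : Fin 2, (p i : ℝ) - a i = t * ((b i : ℝ) - a i) := by
    intro i
    have h := congrFun heq i
    simp only [Pi.add_apply, Pi.smul_apply, smul_eq_mul, castPt] at h
    linear_combination (a i : ℝ) * hst - h
  have h0 := hti 0
  have h1 := hti 1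
  obtain ⟨x, y, hbez⟩ : ∃ x y : ℤ,
      (Int.gcd (b 0 - a 0) (b 1 - a 1) : ℤ) = (b 0 - a 0) * x + (b 1 - a 1) * y :=
    ⟨_, _, Int.gcd_eq_gcd_ab _ _⟩
  set G : ℤ := (Int.gcd (b 0 - a 0) (b 1 - a 1) : ℤ) with hGdef
  have hG0 : 0 < G := by rw [hGdef]; exact_mod_cast hg0
  have hG2 : G ≤ 2 := by rw [hGdef]; exact_mod_cast hg2
  set k : ℤ := (p 0 - a 0) * x + (p 1 - a 1) * y with hk
  have hbezR : (G : ℝ) = ((b 0 : ℝ) - a 0) * x + ((b 1 : ℝ) - a 1) * y := by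
    exact_mod_cast hbez
  have hkR : (k : ℝ) = t * (G : ℝ) := by
    push_cast [hk]
    linear_combination (x : ℝ) * h0 + (y : ℝ) * h1 - t * hbezR
  have ht1 : t ≤ 1 := by linarith
  have hGR : (0:ℝ) ≤ (G:ℝ) := by exact_mod_cast hG0.le
  have hk0 : 0 ≤ k := by
    have : (0:ℝ) ≤ (k:ℝ) := by rw [hkR]; positivity
    exact_mod_cast this
  have hk1 : k ≤ G := by
    have : (k:ℝ) ≤ (G:ℝ) := by
      rw [hkR]
      nlinarith [mul_nonneg (by linarith : (0:ℝ) ≤ 1 - t) hGR]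
    exact_mod_cast this
  have hgi : ∀ i : Fin 2, G * (p i - a i) = k * (b i - a i) := by
    intro i
    have hR : (G : ℝ) * ((p i : ℝ) - a i) = (k:ℝ) * ((b i : ℝ) - a i) := by
      rw [hti i, hkR]; ring
    exact_mod_cast hR
  have hGcase : G = 1 ∨ G = 2 := by omega
  rcases hGcase with hG | hG
  · rw [hG] at hgi hk1
    interval_cases k
    · left; funext i; have := hgi i; omega
    · right; right; funext i; have := hgi i; omega
  · rw [hG] at hgi hk1 hGdef
    have hg2' : Int.gcd (b 0 - a 0) (b 1 - a 1) = 2 := by exact_mod_cast hGdef.symm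
    interval_cases k
    · left; funext i; have := hgi i; omega
    · right; left
      refine ⟨hg2', ?_⟩
      funext i; have := hgi i; simp only [midPt]; omega
    · right; right; funext i; have := hgi i; omega

/-- The explicit drawing of K₇. -/
def K7pts : Fin 7 → Fin 2 → ℤ :=
  ![![0,0], ![0,1], ![1,0], ![1,1], ![2,3], ![2,4], ![3,2]]

lemma K7_inj : Function.Injective K7pts := by decide

lemma K7_gcd : ∀ u v : Fin 7, u ≠ v →
    0 < Int.gcd (K7pts v 0 - K7pts u 0) (K7pts v 1 - K7pts u 1) ∧
    Int.gcd (K7pts v 0 - K7pts u 0) (K7pts v 1 - K7pts u 1) ≤ 2 := by decide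

lemma K7_mid : ∀ u v w : Fin 7, u ≠ v →
    Int.gcd (K7pts v 0 - K7pts u 0) (K7pts v 1 - K7pts u 1) = 2 →
    K7pts w = midPt (K7pts u) (K7pts v) → w = u ∨ w = v := by decide

theorem K7_threeLocatable_not_three_cols :
    IsQLocatable (⊤ : SimpleGraph (Fin 7)) 2 3 ∧
      ¬ EmbeddableOnCols (⊤ : SimpleGraph (Fin 7)) 3 := by
  constructor
  · refine ⟨K7pts, ⟨K7_inj, ?_⟩, ?_⟩
    · intro u v w huv hseg
      have hne : u ≠ v := huv.ne
      rcases key_lemma _ _ _ (K7_gcd u v hne).1 (K7_gcd u v hne).2 hseg with h | ⟨hg, h⟩ | h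
      · left; exact K7_inj h
      · exact K7_mid u v w hne hg h
      · right; exact K7_inj h
    · intro u v huv
      have hne : u ≠ v := huv.ne
      have hsub : segGridPts (K7pts u) (K7pts v) ⊆
          {K7pts u, midPt (K7pts u) (K7pts v), K7pts v} := by
        intro p hp
        rcases key_lemma _ _ _ (K7_gcd u v hne).1 (K7_gcd u v hne).2 hp with h | ⟨_, h⟩ | h <;>
          simp [h]
      have hfin : ({K7pts u, midPt (K7pts u) (K7pts v), K7pts v} :
          Set (Fin 2 → ℤ)).Finite :=
        (Set.finite_singleton _).insert _ |>.insert _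
      calc (segGridPts (K7pts u) (K7pts v)).ncard
          ≤ ({K7pts u, midPt (K7pts u) (K7pts v), K7pts v} : Set (Fin 2 → ℤ)).ncard :=
            Set.ncard_le_ncard hsub hfin
        _ ≤ 3 := by
            have h1 := Set.ncard_insert_le (K7pts u)
              ({midPt (K7pts u) (K7pts v), K7pts v} : Set (Fin 2 → ℤ))
            have h2 := Set.ncard_insert_le (midPt (K7pts u) (K7pts v))
              ({K7pts v} : Set (Fin 2 → ℤ))
            have h3 := Set.ncard_singleton (K7pts v)
            omega
  · rintro ⟨φ, ⟨hinj, hdraw⟩, hcard⟩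
    have hRfin : (Set.range fun v => φ v 0).Finite := Set.finite_range _
    have hTcard : hRfin.toFinset.card ≤ 3 := by
      rwa [Set.ncard_eq_toFinset_card _ hRfin] at hcard
    have hmaps : ∀ a ∈ (Finset.univ : Finset (Fin 7)), φ a 0 ∈ hRfin.toFinset := by
      intro a _
      rw [Set.Finite.mem_toFinset]
      exact ⟨a, rfl⟩
    have hlt : hRfin.toFinset.card * 2 < (Finset.univ : Finset (Fin 7)).card := by
      simp only [Finset.card_univ, Fintype.card_fin]
      omega
    obtain ⟨c, _, hc⟩ := Finset.exists_lt_card_fiber_of_mul_lt_card_of_maps_to hmaps hlt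
    rw [Finset.two_lt_card] at hc
    obtain ⟨u, hu, v, hv, w, hw, huv, huw, hvw⟩ := hc
    rw [Finset.mem_filter] at hu hv hw
    have hu := hu.2; have hv := hv.2; have hw := hw.2
    -- y-coordinates are distinct
    have hyne : ∀ a b : Fin 7, a ≠ b → φ a 0 = φ b 0 → φ a 1 ≠ φ b 1 := by
      intro a b hab hx hy
      apply hab
      apply hinj
      funext i
      fin_cases i
      · exact hx
      · exact hy
    -- the key collinearity contradiction
    have key2 : ∀ A B C : Fin 7, A ≠ C → B ≠ A → B ≠ C →
        φ A 0 = φ B 0 → φ B 0 = φ C 0 →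
        φ A 1 < φ B 1 → φ B 1 < φ C 1 → False := by
      intro A B C hAC hBA hBC hx1 hx2 hy1 hy2
      have hadj : (⊤ : SimpleGraph (Fin 7)).Adj A C := by simp [hAC]
      have hAC1 : (φ A 1 : ℝ) < φ C 1 := by exact_mod_cast hy1.trans hy2
      have hD : (0:ℝ) < (φ C 1 : ℝ) - φ A 1 := by linarith
      have hy1R : (φ A 1 : ℝ) < φ B 1 := by exact_mod_cast hy1
      have hy2R : (φ B 1 : ℝ) < φ C 1 := by exact_mod_cast hy2
      have hseg : castPt (φ B) ∈ segment ℝ (castPt (φ A)) (castPt (φ C)) := by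
        refine ⟨((φ C 1 : ℝ) - φ B 1) / ((φ C 1 : ℝ) - φ A 1),
                ((φ B 1 : ℝ) - φ A 1) / ((φ C 1 : ℝ) - φ A 1),
                div_nonneg (by linarith) hD.le,
                div_nonneg (by linarith) hD.le, ?_, ?_⟩
        · field_simp; ring
        · have ex1 : (φ A 0 : ℝ) = φ B 0 := by exact_mod_cast hx1
          have ex2 : (φ B 0 : ℝ) = φ C 0 := by exact_mod_cast hx2
          ext i
          simp only [Pi.add_apply, Pi.smul_apply, smul_eq_mul, castPt]
          revert i
          rw [Fin.forall_fin_two]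
          constructor
          · rw [ex1, ex2]; field_simp; ring
          · field_simp; ring
      rcases hdraw A C B hadj hseg with h | h
      · exact hBA h
      · exact hBC h
    have d12 := hyne u v huv (hu.trans hv.symm)
    have d13 := hyne u w huw (hu.trans hw.symm)
    have d23 := hyne v w hvw (hv.trans hw.symm)
    have exy : ∀ a b : Fin 7, a ∈ ({u,v,w} : Set (Fin 7)) → b ∈ ({u,v,w} : Set (Fin 7)) →
        φ a 0 = φ b 0 := by
      rintro a b (rfl|rfl|rfl) (rfl|rfl|rfl) <;>
        simp_all
    rcases lt_or_gt_of_ne d12 with h1 | h1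
    · rcases lt_or_gt_of_ne d23 with h2 | h2
      · exact key2 u v w huw huv.symm hvw (exy u v (by simp) (by simp)) (exy v w (by simp) (by simp)) h1 h2
      · rcases lt_or_gt_of_ne d13 with h3 | h3
        · exact key2 u w v huv huw.symm (Ne.symm hvw) (exy u w (by simp) (by simp)) (exy w v (by simp) (by simp)) h3 h2
        · exact key2 w u v hvw.symm huw (Ne.symm huv).symm (exy w u (by simp) (by simp)) (exy u v (by simp) (by simp)) h3 h1
    · rcases lt_or_gt_of_ne d13 with h2 | h2
      · exact key2 v u w hvw huv huw (exy v u (by simp) (by simp)) (exy u w (by simp) (by simp)) h1 h2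
      · rcases lt_or_gt_of_ne d23 with h3 | h3
        · exact key2 v w u (Ne.symm huv) hvw.symm huw.symm (exy v w (by simp) (by simp)) (exy w u (by simp) (by simp)) h3 h2
        · exact key2 w v u huw.symm hvw huv.symm (exy w v (by simp) (by simp)) (exy v u (by simp) (by simp)) h3 h1
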